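/- The map φ restricted to 𝒢₂ is injective, and the image G₂ = φ(𝒢₂) has cardinality (1/2)·q^2·(q−1)·((2/3)q^2 − (1/6)q − 5/6), i.e. |G₂| = q^2(q−1)(4q^2 − q − 5)/12. -/

import Mathlib

/-- Tuples `(i, j, k, m, n₁, …, n_{q-2})` of nonnegative integers; the coordinate
`n : Fin (q-2) → ℕ` encodes `n_s` via `n_s = n ⟨s-1, _⟩`, i.e. index `t : Fin (q-2)`
corresponds to the paper's index `s = t + 1`. -/
abbrev GKTup (q : ℕ) := ℕ × ℕ × ℕ × ℕ × (Fin (q - 2) → ℕ)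

/-- `φ(i,j,k,m,n₁,…,n_{q-2}) = i q^3 + j + k q + m (q^2+1) + Σ_{s=1}^{q-2} n_s (s+1) q^2 + 1`. -/
def gkPhi (q : ℕ) (t : GKTup q) : ℕ :=
  t.1 * q ^ 3 + t.2.1 + t.2.2.1 * q + t.2.2.2.1 * (q ^ 2 + 1) +
    (∑ s : Fin (q - 2), t.2.2.2.2 s * ((s.1 + 2) * q ^ 2)) + 1

/-- The weight `i + j + k + m q + Σ_{s=1}^{q-2} n_s ((s+1) q - s)`. -/
def gkWt (q : ℕ) (t : GKTup q) : ℕ :=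
  t.1 + t.2.1 + t.2.2.1 + t.2.2.2.1 * q +
    ∑ s : Fin (q - 2), t.2.2.2.2 s * ((s.1 + 2) * q - (s.1 + 1))

/-- The set `𝒢` of tuples with `j ≤ q - 1` and weight at most `q^2 - 2`. -/
def gkCalG (q : ℕ) : Set (GKTup q) :=
  {t | t.2.1 ≤ q - 1 ∧ gkWt q t ≤ q ^ 2 - 2}

/-- The set of gaps `G = φ(𝒢)`. -/
def gkG (q : ℕ) : Set ℕ := gkPhi q '' gkCalG q

/-- `𝒢₁`: tuples in `𝒢` with `j = 0` and all `n_s = 0`. -/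
def gkCalG1 (q : ℕ) : Set (GKTup q) :=
  {t | t ∈ gkCalG q ∧ t.2.1 = 0 ∧ ∀ s, t.2.2.2.2 s = 0}

/-- `𝒢₂`: tuples in `𝒢` with `1 ≤ j ≤ q - 1`, `k ≤ q - 1`, `j + m ≤ q - 1` and all `n_s = 0`. -/
def gkCalG2 (q : ℕ) : Set (GKTup q) :=
  {t | t ∈ gkCalG q ∧ 1 ≤ t.2.1 ∧ t.2.1 ≤ q - 1 ∧ t.2.2.1 ≤ q - 1 ∧
    t.2.1 + t.2.2.2.1 ≤ q - 1 ∧ ∀ s, t.2.2.2.2 s = 0}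

/-- `𝒢₃`: tuples in `𝒢` with `m = 0`, `k ≤ q - 1`, exactly one `n_s = 1` (the other `n`'s
being zero) and `i + k + (s+1) q ≥ q^2 - 1`. -/
def gkCalG3 (q : ℕ) : Set (GKTup q) :=
  {t | t ∈ gkCalG q ∧ t.2.2.2.1 = 0 ∧ t.2.2.1 ≤ q - 1 ∧
    ∃ s : Fin (q - 2), t.2.2.2.2 s = 1 ∧ (∀ s', s' ≠ s → t.2.2.2.2 s' = 0) ∧
      q ^ 2 - 1 ≤ t.1 + t.2.2.1 + (s.1 + 2) * q}

lemma gk_sumQuad (a b c : ℤ) (f : ℕ → ℤ) (n : ℕ) (hf : ∀ t < n, f t = a * t ^ 2 + b * t + c) :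
    6 * ∑ t ∈ Finset.range n, f t
      = a * (n * (n - 1) * (2 * n - 1)) + 3 * b * (n * (n - 1)) + 6 * c * n := by
  induction n with
  | zero => simp
  | succ n ih =>
    rw [Finset.sum_range_succ, hf n (by omega)]
    have ih' := ih (fun t ht => hf t (by omega))
    push_cast
    push_cast at ih'
    linear_combination ih'

lemma gk_digit {q a1 a2 b1 b2 : ℕ} (hq : 0 < q) (h1 : a1 < q) (h2 : a2 < q)
    (h : a1 + q * b1 = a2 + q * b2) : a1 = a2 ∧ b1 = b2 := by
  have ha : a1 = a2 := by
    have := congrArg (· % q) h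
    simpa [Nat.add_mul_mod_self_left, Nat.mod_eq_of_lt h1, Nat.mod_eq_of_lt h2] using this
  subst ha
  exact ⟨rfl, Nat.eq_of_mul_eq_mul_left hq (Nat.add_left_cancel h)⟩

lemma gk_bound {q j k m : ℕ} (hq : 2 ≤ q) (hj1 : 1 ≤ j) (hjm : m + j + 1 ≤ q) (hk : k < q) :
    j + k + m * q + 2 ≤ q * q := by
  have hA : (m + j + 1) * q ≤ q * q := Nat.mul_le_mul_right q hjm
  have hB : j * 2 ≤ j * q := Nat.mul_le_mul_left j hq
  rw [add_mul, add_mul, one_mul] at hA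
  omega

set_option maxHeartbeats 1000000 in
lemma gk_sum_value (q : ℕ) (hq2 : 2 ≤ q) :
    (∑ j ∈ Finset.Icc 1 (q-1), ∑ k ∈ Finset.range q,
      ∑ m ∈ Finset.range (q - j), (q^2 - 1 - j - k - m*q))
    = q ^ 2 * (q - 1) * (4 * q ^ 2 - q - 5) / 12 := by
  set N : ℕ := ∑ j ∈ Finset.Icc 1 (q-1), ∑ k ∈ Finset.range q,
      ∑ m ∈ Finset.range (q - j), (q^2 - 1 - j - k - m*q) with hN
  have hre : N = ∑ u ∈ Finset.range (q-1), ∑ k ∈ Finset.range q,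
      ∑ m ∈ Finset.range (q - (1+u)), (q^2 - 1 - (1+u) - k - m*q) := by
    rw [hN, show Finset.Icc 1 (q-1) = Finset.Ico 1 q by
      rw [← Finset.Ico_add_one_right_eq_Icc]; congr 1; omega, Finset.sum_Ico_eq_sum_range]
  have hcast : (N : ℤ) = ∑ u ∈ Finset.range (q-1), ∑ k ∈ Finset.range q,
      ∑ m ∈ Finset.range (q - (1+u)), ((q:ℤ)^2 - 2 - u - k - m*q) := by
    rw [hre]
    push_cast
    refine Finset.sum_congr rfl fun u hu => Finset.sum_congr rfl fun k hk =>
      Finset.sum_congr rfl fun m hm => ?_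
    simp only [Finset.mem_range] at hu hk hm
    have hb : (1+u) + k + m * q + 2 ≤ q * q := gk_bound hq2 (by omega) (by omega) hk
    have hq2' : q^2 = q * q := sq q
    rw [hq2']
    obtain ⟨z, hz⟩ : ∃ z, m * q = z := ⟨_, rfl⟩
    obtain ⟨Q, hQ⟩ : ∃ Q, q * q = Q := ⟨_, rfl⟩
    have hz' : (m:ℤ) * (q:ℤ) = (z:ℤ) := by rw [← hz]; push_cast; ring
    have hQ' : (q:ℤ)^2 = (Q:ℤ) := by rw [← hQ]; push_cast; ring
    rw [hz, hQ, hz', hQ']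
    rw [hz, hQ] at hb
    omega
  have hk36 : ∀ u ∈ Finset.range (q-1), (36:ℤ) * ∑ k ∈ Finset.range q,
      ∑ m ∈ Finset.range (q - (1+u)), ((q:ℤ)^2 - 2 - u - k - m*q)
      = (36*(q:ℤ) - 18*(q:ℤ)^2) * u^2 + (90*(q:ℤ) - 72*(q:ℤ)^2) * u
        + 18*(q:ℤ)*((q:ℤ)-1)*((q:ℤ)^2+(q:ℤ)-3) := by
    intro u hu
    simp only [Finset.mem_range] at hu
    have hn : ((q - (1+u) : ℕ) : ℤ) = (q:ℤ) - 1 - u := by omega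
    have hm6 : ∀ k : ℕ, (6:ℤ) * ∑ m ∈ Finset.range (q - (1+u)), ((q:ℤ)^2 - 2 - u - k - m*q)
        = 6*((q:ℤ)^2 - 2 - u - k)*((q:ℤ) - 1 - u)
          - 3*(q:ℤ)*(((q:ℤ) - 1 - u)*((q:ℤ) - 2 - u)) := by
      intro k
      have h := gk_sumQuad 0 (-(q:ℤ)) ((q:ℤ)^2 - 2 - u - k)
        (fun m => (q:ℤ)^2 - 2 - u - k - m*q) (q - (1+u)) (fun m _ => by push_cast; ring)
      rw [hn] at h
      linear_combination h
    have h := gk_sumQuad (0:ℤ) (-6*((q:ℤ) - 1 - u))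
        (6*((q:ℤ)^2 - 2 - u)*((q:ℤ) - 1 - u) - 3*(q:ℤ)*(((q:ℤ) - 1 - u)*((q:ℤ) - 2 - u)))
        (fun k => 6 * ∑ m ∈ Finset.range (q - (1+u)), ((q:ℤ)^2 - 2 - u - k - m*q)) q
        (fun k _ => (hm6 k).trans (by ring))
    rw [← Finset.mul_sum] at h
    linear_combination h
  have h216 : (216:ℤ) * (N:ℤ) = 18 * ((q:ℤ)^2 * ((q:ℤ)-1) * (4*(q:ℤ)^2 - (q:ℤ) - 5)) := by
    rw [hcast]
    have h := gk_sumQuad (36*(q:ℤ) - 18*(q:ℤ)^2) (90*(q:ℤ) - 72*(q:ℤ)^2)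
        (18*(q:ℤ)*((q:ℤ)-1)*((q:ℤ)^2+(q:ℤ)-3))
        (fun u => (36:ℤ) * ∑ k ∈ Finset.range q,
          ∑ m ∈ Finset.range (q - (1+u)), ((q:ℤ)^2 - 2 - u - k - m*q)) (q-1)
        (fun u hu => hk36 u (Finset.mem_range.2 hu))
    rw [← Finset.mul_sum] at h
    have hM : ((q - 1 : ℕ) : ℤ) = (q:ℤ) - 1 := by omega
    rw [hM] at h
    linear_combination h
  have h45 : q + 5 ≤ 4 * q^2 := by nlinarith
  have h12 : 12 * N = q ^ 2 * (q - 1) * (4 * q ^ 2 - q - 5) := by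
    have : ((12 * N : ℕ) : ℤ) = ((q ^ 2 * (q - 1) * (4 * q ^ 2 - q - 5) : ℕ) : ℤ) := by
      push_cast [Nat.sub_sub]
      have h1 : ((q - 1 : ℕ) : ℤ) = (q:ℤ) - 1 := by omega
      have h2 : ((4 * q ^ 2 - (q + 5) : ℕ) : ℤ) = 4*(q:ℤ)^2 - (q:ℤ) - 5 := by
        push_cast [Nat.cast_sub h45]
        ring
      rw [h1, h2]
      linarith [h216]
    exact_mod_cast this
  omega

/-- `φ` is injective on `𝒢₂`, and `|φ(𝒢₂)| = q^2 (q-1) (4q^2 - q - 5) / 12`. -/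
theorem gk_card_G2 (q : ℕ) (hq : IsPrimePow q) :
    Set.InjOn (gkPhi q) (gkCalG2 q) ∧
    (gkPhi q '' gkCalG2 q).ncard = q ^ 2 * (q - 1) * (4 * q ^ 2 - q - 5) / 12 := by
  classical
  have hq2 : 2 ≤ q := hq.two_le
  have hinj : Set.InjOn (gkPhi q) (gkCalG2 q) := by
    rintro ⟨i1, j1, k1, m1, n1⟩ h1 ⟨i2, j2, k2, m2, n2⟩ h2 heq
    obtain ⟨⟨-, -⟩, hj1a, hj1b, hk1, hjm1, hn1⟩ := h1
    obtain ⟨⟨-, -⟩, hj2a, hj2b, hk2, hjm2, hn2⟩ := h2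
    have hn1' : ∀ s, n1 s = 0 := hn1
    have hn2' : ∀ s, n2 s = 0 := hn2
    have hjm1' : j1 + m1 ≤ q - 1 := hjm1
    have hjm2' : j2 + m2 ≤ q - 1 := hjm2
    have hj1a' : 1 ≤ j1 := hj1a
    have hj2a' : 1 ≤ j2 := hj2a
    have hk1' : k1 ≤ q - 1 := hk1
    have hk2' : k2 ≤ q - 1 := hk2
    simp only [gkPhi, hn1', hn2', zero_mul, Finset.sum_const_zero, add_zero] at heq
    have heq' : i1 * q ^ 3 + j1 + k1 * q + m1 * (q ^ 2 + 1)
        = i2 * q ^ 3 + j2 + k2 * q + m2 * (q ^ 2 + 1) := Nat.add_right_cancel heq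
    have e1 : (j1 + m1) + q * (k1 + q * (m1 + q * i1))
        = (j2 + m2) + q * (k2 + q * (m2 + q * i2)) := by
      calc (j1 + m1) + q * (k1 + q * (m1 + q * i1))
          = i1 * q ^ 3 + j1 + k1 * q + m1 * (q ^ 2 + 1) := by ring
        _ = i2 * q ^ 3 + j2 + k2 * q + m2 * (q ^ 2 + 1) := heq'
        _ = (j2 + m2) + q * (k2 + q * (m2 + q * i2)) := by ring
    have hqpos : 0 < q := by omega
    obtain ⟨e2, e3⟩ := gk_digit hqpos (by omega : j1 + m1 < q) (by omega : j2 + m2 < q) e1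
    obtain ⟨e4, e5⟩ := gk_digit hqpos (by omega : k1 < q) (by omega : k2 < q) e3
    obtain ⟨e6, e7⟩ := gk_digit hqpos (by omega : m1 < q) (by omega : m2 < q) e5
    have hn : n1 = n2 := funext fun s => by rw [hn1' s, hn2' s]
    simp only [Prod.mk.injEq]
    exact ⟨e7, by omega, e4, e6, hn⟩
  refine ⟨hinj, ?_⟩
  set S : Finset (ℕ × ℕ × ℕ × ℕ) :=
    (Finset.Icc 1 (q-1)).biUnion (fun j =>
      (Finset.range q).biUnion (fun k =>
        (Finset.range (q - j)).biUnion (fun m =>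
          (Finset.range (q^2 - 1 - j - k - m*q)).image (fun i => (j, k, m, i))))) with hS
  have hmem : ∀ x : ℕ × ℕ × ℕ × ℕ, x ∈ S ↔
      1 ≤ x.1 ∧ x.1 ≤ q - 1 ∧ x.2.1 < q ∧ x.2.2.1 < q - x.1 ∧
        x.2.2.2 < q^2 - 1 - x.1 - x.2.1 - x.2.2.1 * q := by
    rintro ⟨j, k, m, i⟩
    simp only [hS, Finset.mem_biUnion, Finset.mem_image, Finset.mem_Icc, Finset.mem_range,
      Prod.mk.injEq]
    constructor
    · rintro ⟨j', ⟨ha, hb⟩, k', hk', m', hm', i', hi', rfl, rfl, rfl, rfl⟩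
      exact ⟨ha, hb, hk', hm', hi'⟩
    · rintro ⟨h1, h2, h3, h4, h5⟩
      exact ⟨j, ⟨h1, h2⟩, k, h3, m, h4, i, h5, rfl, rfl, rfl, rfl⟩
  -- the parametrization map
  set F : ℕ × ℕ × ℕ × ℕ → GKTup q :=
    fun x => (x.2.2.2, x.1, x.2.1, x.2.2.1, fun _ => 0) with hF
  have hQ2 : 2 ≤ q^2 := by nlinarith
  have himg : gkCalG2 q = F '' ↑S := by
    ext t
    obtain ⟨i, j, k, m, n⟩ := t
    constructor
    · rintro ⟨⟨hja, hwt⟩, hj1, hj2, hk, hjm, hn⟩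
      have hn' : ∀ s, n s = 0 := hn
      have hwt' : i + j + k + m * q +
          (∑ s : Fin (q-2), n s * ((s.1 + 2) * q - (s.1 + 1))) ≤ q^2 - 2 := hwt
      simp only [hn', zero_mul, Finset.sum_const_zero, add_zero] at hwt'
      have hj1' : 1 ≤ j := hj1
      have hj2' : j ≤ q - 1 := hj2
      have hk' : k ≤ q - 1 := hk
      have hjm' : j + m ≤ q - 1 := hjm
      refine ⟨(j, k, m, i), (hmem _).2 ⟨hj1', hj2', by show k < q; omega,
        by show m < q - j; omega, ?_⟩, ?_⟩
      · show i < q^2 - 1 - j - k - m * q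
        obtain ⟨z, hz⟩ : ∃ z, m * q = z := ⟨_, rfl⟩
        rw [hz] at hwt' ⊢
        omega
      · have : n = fun _ => 0 := funext fun s => hn' s
        simp [hF, this]
    · rintro ⟨⟨j', k', m', i'⟩, hx, heq⟩
      obtain ⟨h1, h2, h3, h4, h5⟩ := (hmem _).1 hx
      simp only [hF, Prod.mk.injEq] at heq
      obtain ⟨rfl, rfl, rfl, rfl, rfl⟩ := heq
      have h3' : k' < q := h3
      have h4' : m' < q - j' := h4
      have h5' : i' < q^2 - 1 - j' - k' - m' * q := h5
      refine ⟨⟨h2, ?_⟩, h1, h2, by show k' ≤ q - 1; omega,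
        by show j' + m' ≤ q - 1; omega, fun s => rfl⟩
      show i' + j' + k' + m' * q +
          (∑ s : Fin (q-2), (0:ℕ) * ((s.1 + 2) * q - (s.1 + 1))) ≤ q^2 - 2
      simp only [zero_mul, Finset.sum_const_zero, add_zero]
      obtain ⟨z, hz⟩ : ∃ z, m' * q = z := ⟨_, rfl⟩
      rw [hz] at h5' ⊢
      omega
  have hFinj : Function.Injective F := by
    rintro ⟨a1, a2, a3, a4⟩ ⟨b1, b2, b3, b4⟩ h
    simp only [hF, Prod.mk.injEq] at h
    obtain ⟨h1, h2, h3, h4, -⟩ := h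
    simp [h1, h2, h3, h4]
  have hcardS : S.card = ∑ j ∈ Finset.Icc 1 (q-1), ∑ k ∈ Finset.range q,
      ∑ m ∈ Finset.range (q - j), (q^2 - 1 - j - k - m*q) := by
    rw [hS, Finset.card_biUnion]
    · refine Finset.sum_congr rfl fun j _ => ?_
      rw [Finset.card_biUnion]
      · refine Finset.sum_congr rfl fun k _ => ?_
        rw [Finset.card_biUnion]
        · refine Finset.sum_congr rfl fun m _ => ?_
          rw [Finset.card_image_of_injective _ (fun a b h => by
            simpa using h), Finset.card_range]
        · intro m1 _ m2 _ hne
          rw [Function.onFun, Finset.disjoint_left]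
          rintro a ha hb
          simp only [Finset.mem_image, Finset.mem_range] at ha hb
          obtain ⟨i1, -, rfl⟩ := ha
          obtain ⟨i2, -, h⟩ := hb
          simp only [Prod.mk.injEq] at h
          exact hne h.2.2.1.symm
      · intro k1 _ k2 _ hne
        rw [Function.onFun, Finset.disjoint_left]
        rintro a ha hb
        simp only [Finset.mem_biUnion, Finset.mem_image, Finset.mem_range] at ha hb
        obtain ⟨m1, -, i1, -, rfl⟩ := ha
        obtain ⟨m2, -, i2, -, h⟩ := hb
        simp only [Prod.mk.injEq] at h
        exact hne h.2.1.symm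
    · intro j1 _ j2 _ hne
      rw [Function.onFun, Finset.disjoint_left]
      rintro a ha hb
      simp only [Finset.mem_biUnion, Finset.mem_image, Finset.mem_range] at ha hb
      obtain ⟨k1, -, m1, -, i1, -, rfl⟩ := ha
      obtain ⟨k2, -, m2, -, i2, -, h⟩ := hb
      simp only [Prod.mk.injEq] at h
      exact hne h.1.symm
  calc (gkPhi q '' gkCalG2 q).ncard = (gkCalG2 q).ncard := Set.ncard_image_of_injOn hinj
    _ = (F '' ↑S).ncard := by rw [himg]
    _ = (↑S : Set (ℕ × ℕ × ℕ × ℕ)).ncard := Set.ncard_image_of_injective _ hFinj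
    _ = S.card := Set.ncard_coe_finset S
    _ = _ := by rw [hcardS]; exact gk_sum_value q hq2
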